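/- Let T=(V,E,ω) be a tree with an up-monotonic and rounded cost function, rooted as in the definition of up-monotonicity, and let f_opt be an optimal structured extended strategy function on V. Let L be a layer component of T with layer components L_1,…,L_k directly below L and let v_j be the root of L_j for 1 ≤ j ≤ k. Define f' on V by f'(u) = f_opt(u) for every vertex u that is a proper descendant of some v_j, and f'(u) = f_opt(u) + ω(L) for every other vertex u (including each v_j). Then f' is a structured extended strategy function on V. -/

import Mathlib

universe u

/-- A half-open interval `[a, b)` with integer endpoints `0 ≤ a < b`. -/
structure HInterval : Type where
  a : ℕ
  b : ℕ
  hab : a < b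

namespace HInterval

/-- The interval `[a, b)` as a set of naturals. -/
def toSet (I : HInterval) : Set ℕ := Set.Ico I.a I.b

/-- The length `|[a,b)| = b - a` of an interval. -/
def len (I : HInterval) : ℕ := I.b - I.a

/-- `I < J` for intervals `I = [a,b)`, `J = [a',b')`: it means `b ≤ a'`. -/
def Lt (I J : HInterval) : Prop := I.b ≤ J.a

/-- `K > I ∪ J`: the interval `K` lies entirely above both `I` and `J`. -/
def GtUnion (K I J : HInterval) : Prop := I.b ≤ K.a ∧ J.b ≤ K.a

/-- The interval shifted by a constant `c`, i.e. `[a+c, b+c)`. -/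
def shift (I : HInterval) (c : ℕ) : HInterval :=
  ⟨I.a + c, I.b + c, by have := I.hab; omega⟩

end HInterval

variable {V : Type u}

/-- `v` lies on the path between `r` and `u` in `G` (when `G` is a tree,
the path between any two vertices is unique). -/
def OnPath (G : SimpleGraph V) (r u v : V) : Prop :=
  ∀ p : G.Walk r u, p.IsPath → v ∈ p.support

/-- An extended strategy function for `(G, ω)`: it assigns to each vertex `v` an
interval of length at least `ω v` such that, whenever the intervals of two distinct
vertices intersect, the path connecting them contains a vertex whose interval lies
above the union of the two intervals. -/
def IsESF (G : SimpleGraph V) (ω : V → ℝ) (f : V → HInterval) : Prop :=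
  (∀ v, ω v ≤ ((f v).len : ℝ)) ∧
  ∀ v₁ v₂ : V, v₁ ≠ v₂ → ((f v₁).toSet ∩ (f v₂).toSet).Nonempty →
    ∀ p : G.Walk v₁ v₂, p.IsPath →
      ∃ v₃ ∈ p.support, (f v₃).GtUnion (f v₁) (f v₂)

/-- `sup ⋃_{v ∈ V} f(v)`: the supremum of the union of all assigned intervals. -/
noncomputable def supEnd [Fintype V] (f : V → HInterval) : ℕ :=
  Finset.univ.sup fun v => (f v).b

/-- An extended strategy function is optimal if the supremum of the union of its
intervals is minimal among all extended strategy functions for `(G, ω)`. -/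
def IsOptimalESF [Fintype V] (G : SimpleGraph V) (ω : V → ℝ) (f : V → HInterval) : Prop :=
  IsESF G ω f ∧ ∀ g : V → HInterval, IsESF G ω g → supEnd f ≤ supEnd g

/-- `u` is screening `v`: `u` is the only vertex `x` on the path connecting `v`
and `u` with `f v < f x`. -/
def Screens (G : SimpleGraph V) (f : V → HInterval) (v u : V) : Prop :=
  ∀ p : G.Walk v u, p.IsPath → ∀ x ∈ p.support, ((f v).Lt (f x) ↔ x = u)

/-- `u` belongs to the screening neighborhood `N(v)` of `v`: `u` is `v` itself, or
`u` is screening `v`, or the path connecting `u` and `v` has no vertex screening `v`. -/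
def InScrNbhd (G : SimpleGraph V) (f : V → HInterval) (v u : V) : Prop :=
  u = v ∨ Screens G f v u ∨
    ∀ p : G.Walk u v, p.IsPath → ∀ x ∈ p.support, ¬ Screens G f v x

/-- `u` is visible from `v`: no vertex `x` on the path connecting `u` and `v`
satisfies `f u < f x`. -/
def Visible (G : SimpleGraph V) (f : V → HInterval) (u v : V) : Prop :=
  ∀ p : G.Walk u v, p.IsPath → ∀ x ∈ p.support, ¬ (f u).Lt (f x)

/-- The vertex `u` is aligned w.r.t. `f` and `ω` if both endpoints of `f u`
are integer multiples of `ω u`. -/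
def AlignedAt (ω : V → ℝ) (f : V → HInterval) (u : V) : Prop :=
  (∃ m : ℕ, ((f u).a : ℝ) = m * ω u) ∧ (∃ m : ℕ, ((f u).b : ℝ) = m * ω u)

/-- An extended strategy function on the subgraph of `G` induced by the vertex set `A`. -/
def IsESFOn (G : SimpleGraph V) (ω : V → ℝ) (f : V → HInterval) (A : Set V) : Prop :=
  (∀ v ∈ A, ω v ≤ ((f v).len : ℝ)) ∧
  ∀ v₁ ∈ A, ∀ v₂ ∈ A, v₁ ≠ v₂ → ((f v₁).toSet ∩ (f v₂).toSet).Nonempty →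
    ∀ p : G.Walk v₁ v₂, p.IsPath → (∀ x ∈ p.support, x ∈ A) →
      ∃ v₃ ∈ p.support, (f v₃).GtUnion (f v₁) (f v₂)

/-- The layer component of `u`: the connected component containing `u` of the
subgraph of `G` induced by the vertices whose cost equals `ω u`. -/
def layerComp {V : Type u} (G : SimpleGraph V) (ω : V → ℝ) (u : V) : Set V :=
  {w | ω w = ω u ∧ ∃ p : G.Walk u w, ∀ x ∈ p.support, ω x = ω u}

/-- `L` is a layer component of `(G, ω)`. -/
def IsLayerComp {V : Type u} (G : SimpleGraph V) (ω : V → ℝ) (L : Set V) : Prop :=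
  ∃ u, L = layerComp G ω u

/-- `x` is the root of its layer component (w.r.t. the root `r` of the tree):
`x` is the vertex of its layer component closest to `r`, equivalently every vertex
of the layer component of `x` is a descendant of `x`. -/
def IsLayerRoot {V : Type u} (G : SimpleGraph V) (ω : V → ℝ) (r x : V) : Prop :=
  ∀ w ∈ layerComp G ω x, OnPath G r w x

/-- The cost function `ω` is up-monotonic with respect to the root `r`: costs are
non-increasing along any path going away from `r`. -/
def UpMonotonicAt {V : Type u} (G : SimpleGraph V) (ω : V → ℝ) (r : V) : Prop :=
  ∀ u v : V, OnPath G r u v → ω u ≤ ω v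

/-- The cost function `ω` is rounded: all its values are powers of two. -/
def Rounded {V : Type u} (ω : V → ℝ) : Prop := ∀ v, ∃ k : ℕ, ω v = 2 ^ k

/-- The extended strategy function `f` is structured: for every layer-component root
`x`, `f(x) > f(u)` for every vertex `u` of the subtree `T_x` other than `x`. -/
def StructuredESF {V : Type u} (G : SimpleGraph V) (ω : V → ℝ) (r : V)
    (f : V → HInterval) : Prop :=
  ∀ x : V, IsLayerRoot G ω r x → ∀ u : V, OnPath G r u x → u ≠ x → (f u).Lt (f x)

/-- `u` is a proper descendant of the root `x` of some layer component directly below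
`L` (i.e. the parent `px` of `x` belongs to `L`). -/
def ProperDescOfRootBelow {V : Type u} (G : SimpleGraph V) (ω : V → ℝ) (r : V)
    (L : Set V) (u : V) : Prop :=
  ∃ x : V, IsLayerRoot G ω r x ∧ (∃ px ∈ L, G.Adj px x ∧ OnPath G r x px) ∧
    OnPath G r u x ∧ u ≠ x


set_option linter.unusedSectionVars false
set_option linter.unusedVariables false

section Stmt15Aux

open SimpleGraph Walk

variable {V : Type u} [DecidableEq V] {G : SimpleGraph V}

lemma path_eq' (hG : G.IsTree) {v w : V} {p q : G.Walk v w} (hp : p.IsPath) (hq : q.IsPath) :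
    p = q := ((hG.existsUnique_path v w).unique hp hq)

noncomputable def thePath (hG : G.IsTree) (v w : V) : G.Walk v w :=
  (hG.existsUnique_path v w).exists.choose

lemma thePath_isPath (hG : G.IsTree) (v w : V) : (thePath hG v w).IsPath :=
  (hG.existsUnique_path v w).exists.choose_spec

lemma onPath_of_mem (hG : G.IsTree) {r u v : V} {p : G.Walk r u} (hp : p.IsPath)
    (hv : v ∈ p.support) : OnPath G r u v := fun q hq => (path_eq' hG hq hp) ▸ hv

lemma not_onPath_iff (hG : G.IsTree) {r u v : V} :
    ¬ OnPath G r u v ↔ v ∉ (thePath hG r u).support := by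
  constructor
  · intro h hv; exact h (onPath_of_mem hG (thePath_isPath hG r u) hv)
  · intro h hOn; exact h (hOn _ (thePath_isPath hG r u))

/-- Lemma C: separation. -/
lemma mem_support_of_separation (hG : G.IsTree) {r v w x : V}
    {p : G.Walk r v} (hp : p.IsPath) {q : G.Walk r w} (hq : q.IsPath)
    {s : G.Walk v w} (hs : s.IsPath)
    (hx : x ∈ p.support) (hxq : x ∉ q.support) : x ∈ s.support := by
  by_contra h
  have hW : p = (q.append s.reverse).bypass := path_eq' hG hp ((q.append s.reverse).bypass_isPath)
  have hx2 : x ∈ (q.append s.reverse).support :=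
    (q.append s.reverse).support_bypass_subset (hW ▸ hx)
  rw [Walk.mem_support_append_iff] at hx2
  rcases hx2 with h1 | h2
  · exact hxq h1
  · rw [Walk.support_reverse, List.mem_reverse] at h2; exact h h2

lemma support_subset_of_mem (hG : G.IsTree) {a b m : V} {p : G.Walk a b} (hp : p.IsPath)
    (hm : m ∈ p.support) {q : G.Walk a m} (hq : q.IsPath) : q.support ⊆ p.support := by
  have h : q = p.takeUntil m hm := path_eq' hG hq (hp.takeUntil hm)
  rw [h]; exact p.support_takeUntil_subset hm

/-- antisymmetry -/
lemma eq_of_onPath_antisymm (hG : G.IsTree) {r u v : V}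
    (h1 : OnPath G r u v) (h2 : OnPath G r v u) : u = v := by
  by_contra hne
  set p := thePath hG r u with hpdef
  have hp := thePath_isPath hG r u
  have hv : v ∈ p.support := h1 p hp
  have ht : (p.takeUntil v hv).IsPath := hp.takeUntil hv
  have hu : u ∈ (p.takeUntil v hv).support := h2 _ ht
  have hspec := p.take_spec hv
  have hnodup : p.support.Nodup := hp.support_nodup
  have hsupp : p.support = (p.takeUntil v hv).support ++ (p.dropUntil v hv).support.tail := by
    conv_lhs => rw [← hspec]
    exact Walk.support_append _ _
  rw [hsupp] at hnodup
  have hdisj := List.disjoint_of_nodup_append hnodup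
  have hu2 : u ∈ (p.dropUntil v hv).support := (p.dropUntil v hv).end_mem_support
  rw [Walk.support_eq_cons, List.mem_cons] at hu2
  rcases hu2 with hu2 | hu2
  · exact hne hu2
  · exact hdisj hu hu2

lemma onPath_trans (hG : G.IsTree) {r u x y : V}
    (h1 : OnPath G r u x) (h2 : OnPath G r x y) : OnPath G r u y := by
  intro p hp
  have hx : x ∈ p.support := h1 p hp
  have ht : (p.takeUntil x hx).IsPath := hp.takeUntil hx
  exact p.support_takeUntil_subset hx (h2 _ ht)

/-- Lemma F: ancestors other than `x` of `x` are ancestors of its parent `px`. -/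
lemma onPath_parent (hG : G.IsTree) {r x px y : V} (hadj : G.Adj px x)
    (hpx : OnPath G r x px) (hy : OnPath G r x y) (hyx : y ≠ x) : OnPath G r px y := by
  set p := thePath hG r x with hpdef
  have hp := thePath_isPath hG r x
  have hpxm : px ∈ p.support := hpx p hp
  have ht : (p.takeUntil px hpxm).IsPath := hp.takeUntil hpxm
  have hd : (p.dropUntil px hpxm).IsPath := hp.dropUntil hpxm
  have hedge : (Walk.cons hadj Walk.nil : G.Walk px x).IsPath := by
    simp [Walk.isPath_def, hadj.ne]
  have hde : p.dropUntil px hpxm = Walk.cons hadj Walk.nil := path_eq' hG hd hedge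
  have hsupp : p.support = (p.takeUntil px hpxm).support ++ [x] := by
    conv_lhs => rw [← p.take_spec hpxm]
    rw [Walk.support_append, hde]
    simp
  have hym : y ∈ p.support := hy p hp
  rw [hsupp, List.mem_append] at hym
  rcases hym with hym | hym
  · exact onPath_of_mem hG ht hym
  · simp at hym; exact absurd hym hyx

/-- Lemma D -/
lemma root_mem_path (hG : G.IsTree) {r x w₁ w₂ v₃ : V} {p : G.Walk w₁ w₂} (hp : p.IsPath)
    (hv₃ : v₃ ∈ p.support) (hx : OnPath G r v₃ x)
    (hcond : ¬ OnPath G r w₁ x ∨ w₁ = x) : x ∈ p.support := by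
  rcases hcond with hcond | rfl
  · rw [not_onPath_iff hG] at hcond
    have hs : ((p.takeUntil v₃ hv₃).reverse).IsPath := (hp.takeUntil hv₃).reverse
    have hmem : x ∈ ((p.takeUntil v₃ hv₃).reverse).support :=
      mem_support_of_separation hG (thePath_isPath hG r v₃) (thePath_isPath hG r w₁) hs
        (hx _ (thePath_isPath hG r v₃)) hcond
    rw [Walk.support_reverse, List.mem_reverse] at hmem
    exact p.support_takeUntil_subset hv₃ hmem
  · exact p.start_mem_support


variable {ω : V → ℝ} {r : V} {L : Set V} {c : ℕ}

/-- Lemma E: a root of a layer component directly below `L` has cost `< c`. -/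
lemma root_cost_lt (hG : G.IsTree) (hup : UpMonotonicAt G ω r) (hc : ∀ u ∈ L, ω u = (c : ℝ))
    {x px : V} (hroot : IsLayerRoot G ω r x) (hpxL : px ∈ L) (hadj : G.Adj px x)
    (hpath : OnPath G r x px) : ω x < (c : ℝ) := by
  have hle : ω x ≤ ω px := hup x px hpath
  have hpxc : ω px = (c : ℝ) := hc px hpxL
  rcases lt_or_eq_of_le hle with h | h
  · rwa [hpxc] at h
  · exfalso
    have hmem : px ∈ layerComp G ω x := by
      refine ⟨h.symm, Walk.cons hadj.symm Walk.nil, ?_⟩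
      intro z hz
      simp only [Walk.support_cons, Walk.support_nil, List.mem_cons, List.mem_singleton] at hz
      rcases hz with rfl | rfl | h'
      · rfl
      · exact h.symm
      · exact absurd h' List.not_mem_nil
    have := eq_of_onPath_antisymm hG hpath (hroot px hmem)
    exact hadj.ne' this

/-- Lemma G: a root of a layer component directly below `L` is not itself a proper
descendant of such a root. -/
lemma root_not_desc (hG : G.IsTree) (hup : UpMonotonicAt G ω r) (hc : ∀ u ∈ L, ω u = (c : ℝ))
    {x : V} (hroot : IsLayerRoot G ω r x)
    (hb : ∃ px ∈ L, G.Adj px x ∧ OnPath G r x px) :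
    ¬ ProperDescOfRootBelow G ω r L x := by
  rintro ⟨y, hyroot, ⟨py, hpyL, hpyadj, hpypath⟩, hxy, hxney⟩
  obtain ⟨px, hpxL, hadj, hpath⟩ := hb
  have hyc : ω y < (c : ℝ) := root_cost_lt hG hup hc hyroot hpyL hpyadj hpypath
  have hpxy : OnPath G r px y := onPath_parent hG hadj hpath hxy hxney.symm
  have h1 : ω px ≤ ω y := hup px y hpxy
  have h2 : ω px = (c : ℝ) := hc px hpxL
  linarith

end Stmt15Aux

open SimpleGraph Walk

/-- Let `T = (V,E,ω)` be a tree with an up-monotonic and rounded cost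
function rooted at `r`, and let `f_opt` be an optimal structured extended strategy
function on `V`. Let `L` be a layer component of `T` (of cost `c = ω(L)`) and define
`f'` by `f'(u) = f_opt(u)` for every proper descendant `u` of a root of a layer
component directly below `L`, and `f'(u) = f_opt(u) + ω(L)` for every other vertex `u`.
Then `f'` is a structured extended strategy function on `V`. -/
theorem stmt15 {V : Type u} [Fintype V] (G : SimpleGraph V) (hG : G.IsTree)
    (ω : V → ℝ) (r : V) (hup : UpMonotonicAt G ω r) (hround : Rounded ω)
    (f_opt : V → HInterval)
    (hESF : IsESF G ω f_opt) (hstr : StructuredESF G ω r f_opt)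
    (hopt : ∀ g : V → HInterval, IsESF G ω g → StructuredESF G ω r g →
      supEnd f_opt ≤ supEnd g)
    (L : Set V) (hL : IsLayerComp G ω L)
    (c : ℕ) (hc : ∀ u ∈ L, ω u = (c : ℝ))
    (f' : V → HInterval)
    (hf'₁ : ∀ u, ProperDescOfRootBelow G ω r L u → f' u = f_opt u)
    (hf'₂ : ∀ u, ¬ ProperDescOfRootBelow G ω r L u → f' u = (f_opt u).shift c) :
    IsESF G ω f' ∧ StructuredESF G ω r f' := by
  classical
  -- abbreviation for membership in D
  set D : V → Prop := ProperDescOfRootBelow G ω r L with hD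
  -- f' pointwise description
  have hlen : ∀ v, ω v ≤ ((f' v).len : ℝ) := by
    intro v
    by_cases hv : D v
    · rw [hf'₁ v hv]; exact hESF.1 v
    · rw [hf'₂ v hv]
      have : ((f_opt v).shift c).len = (f_opt v).len := by
        simp only [HInterval.len, HInterval.shift]; omega
      rw [this]; exact hESF.1 v
  -- the "structured" part
  have hstruct : StructuredESF G ω r f' := by
    intro x hxroot u hux hunex
    have hLt : (f_opt u).Lt (f_opt x) := hstr x hxroot u hux hunex
    by_cases hDx : D x
    · -- then also u ∈ D
      obtain ⟨y, hyroot, hybelow, hxy, hxney⟩ := hDx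
      have huy : OnPath G r u y := onPath_trans hG hux hxy
      have huney : u ≠ y := by
        rintro rfl
        exact hunex (eq_of_onPath_antisymm hG hxy hux).symm
      have hDu : D u := ⟨y, hyroot, hybelow, huy, huney⟩
      rw [hf'₁ u hDu, hf'₁ x ⟨y, hyroot, hybelow, hxy, hxney⟩]
      exact hLt
    · by_cases hDu : D u
      · rw [hf'₁ u hDu, hf'₂ x hDx]
        simp only [HInterval.Lt, HInterval.shift] at hLt ⊢; omega
      · rw [hf'₂ u hDu, hf'₂ x hDx]
        simp only [HInterval.Lt, HInterval.shift] at hLt ⊢; omega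
  refine ⟨⟨hlen, ?_⟩, hstruct⟩
  -- key asymmetric case: a ∈ D, b ∉ D
  have main : ∀ a b : V, a ≠ b → D a → ¬ D b →
      ((f' a).toSet ∩ (f' b).toSet).Nonempty → ∀ q : G.Walk a b, q.IsPath →
      ∃ w ∈ q.support, (f' w).GtUnion (f' a) (f' b) := by
    intro a b hne hDa hDb hint q hq
    obtain ⟨x, hxroot, hxbelow, hax, hanex⟩ := hDa
    have hLt1 : (f_opt a).Lt (f_opt x) := hstr x hxroot a hax hanex
    have hfa : f' a = f_opt a := hf'₁ a ⟨x, hxroot, hxbelow, hax, hanex⟩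
    have hfb : f' b = (f_opt b).shift c := hf'₂ b hDb
    obtain ⟨t, hta, htb⟩ := hint
    rw [hfa] at hta
    rw [hfb] at htb
    simp only [HInterval.toSet, HInterval.shift, Set.mem_Ico] at hta htb
    -- condition for root_mem_path at endpoint b, for any valid root z
    have hcond : ∀ z : V, IsLayerRoot G ω r z → (∃ pz ∈ L, G.Adj pz z ∧ OnPath G r z pz) →
        ¬ OnPath G r b z ∨ b = z := by
      intro z hz hbz
      by_cases hbez : b = z
      · exact Or.inr hbez
      · exact Or.inl fun hOn => hDb ⟨z, hz, hbz, hOn, hbez⟩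
    by_cases hsub : t < (f_opt b).b
    · -- the original intervals intersect
      have hint' : ((f_opt a).toSet ∩ (f_opt b).toSet).Nonempty := by
        refine ⟨t, ?_, ?_⟩ <;> simp only [HInterval.toSet, Set.mem_Ico] <;> omega
      obtain ⟨v₃, hv₃q, hgt⟩ := hESF.2 a b hne hint' q hq
      by_cases hD3 : D v₃
      · obtain ⟨x₃, hx₃root, hx₃below, h3x, h3ne⟩ := hD3
        have hx₃mem : x₃ ∈ q.support := by
          have := root_mem_path hG hq.reverse
            (by rw [Walk.support_reverse, List.mem_reverse]; exact hv₃q)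
            h3x (hcond x₃ hx₃root hx₃below)
          rwa [Walk.support_reverse, List.mem_reverse] at this
        have hLt3 : (f_opt v₃).Lt (f_opt x₃) := hstr x₃ hx₃root v₃ h3x h3ne
        have hx₃nD : ¬ D x₃ := root_not_desc hG hup hc hx₃root hx₃below
        refine ⟨x₃, hx₃mem, ?_⟩
        rw [hfa, hfb, hf'₂ x₃ hx₃nD]
        simp only [HInterval.GtUnion, HInterval.Lt, HInterval.shift] at hgt hLt3 ⊢
        have h3 := (f_opt v₃).hab
        omega
      · refine ⟨v₃, hv₃q, ?_⟩
        rw [hfa, hfb, hf'₂ v₃ hD3]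
        simp only [HInterval.GtUnion, HInterval.shift] at hgt ⊢
        omega
    · -- (f_opt b).b ≤ t : take x itself
      have hxnD : ¬ D x := root_not_desc hG hup hc hxroot hxbelow
      have hxmem : x ∈ q.support := by
        have := root_mem_path hG hq.reverse
          (by rw [Walk.support_reverse, List.mem_reverse]; exact q.start_mem_support)
          hax (hcond x hxroot hxbelow)
        rwa [Walk.support_reverse, List.mem_reverse] at this
      refine ⟨x, hxmem, ?_⟩
      rw [hfa, hfb, hf'₂ x hxnD]
      simp only [HInterval.GtUnion, HInterval.Lt, HInterval.shift] at hLt1 ⊢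
      omega
  intro v₁ v₂ hne hint p hp
  by_cases hD1 : D v₁ <;> by_cases hD2 : D v₂
  · -- both in D: use f_opt's witness directly
    rw [hf'₁ v₁ hD1, hf'₁ v₂ hD2] at hint ⊢
    obtain ⟨v₃, hv₃p, hgt⟩ := hESF.2 v₁ v₂ hne hint p hp
    refine ⟨v₃, hv₃p, ?_⟩
    by_cases hD3 : D v₃
    · rwa [hf'₁ v₃ hD3]
    · rw [hf'₂ v₃ hD3]
      simp only [HInterval.GtUnion, HInterval.shift] at hgt ⊢
      omega
  · exact main v₁ v₂ hne hD1 hD2 hint p hp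
  · obtain ⟨w, hw, hgt⟩ := main v₂ v₁ hne.symm hD2 hD1
      (by rwa [Set.inter_comm]) p.reverse hp.reverse
    rw [Walk.support_reverse, List.mem_reverse] at hw
    exact ⟨w, hw, hgt.2, hgt.1⟩
  · -- both outside D: shift both, use f_opt's witness; fix up if witness in D
    rw [hf'₂ v₁ hD1, hf'₂ v₂ hD2] at hint
    obtain ⟨t, ht1, ht2⟩ := hint
    simp only [HInterval.toSet, HInterval.shift, Set.mem_Ico] at ht1 ht2
    have hint' : ((f_opt v₁).toSet ∩ (f_opt v₂).toSet).Nonempty := by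
      refine ⟨t - c, ?_, ?_⟩ <;> simp only [HInterval.toSet, Set.mem_Ico] <;> omega
    obtain ⟨v₃, hv₃p, hgt⟩ := hESF.2 v₁ v₂ hne hint' p hp
    by_cases hD3 : D v₃
    · obtain ⟨x₃, hx₃root, hx₃below, h3x, h3ne⟩ := hD3
      have hcond1 : ¬ OnPath G r v₁ x₃ ∨ v₁ = x₃ := by
        by_cases h : v₁ = x₃
        · exact Or.inr h
        · exact Or.inl fun hOn => hD1 ⟨x₃, hx₃root, hx₃below, hOn, h⟩
      have hx₃mem : x₃ ∈ p.support := root_mem_path hG hp hv₃p h3x hcond1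
      have hLt3 : (f_opt v₃).Lt (f_opt x₃) := hstr x₃ hx₃root v₃ h3x h3ne
      have hx₃nD : ¬ D x₃ := root_not_desc hG hup hc hx₃root hx₃below
      refine ⟨x₃, hx₃mem, ?_⟩
      rw [hf'₂ v₁ hD1, hf'₂ v₂ hD2, hf'₂ x₃ hx₃nD]
      simp only [HInterval.GtUnion, HInterval.Lt, HInterval.shift] at hgt hLt3 ⊢
      have h3 := (f_opt v₃).hab
      omega
    · refine ⟨v₃, hv₃p, ?_⟩
      rw [hf'₂ v₁ hD1, hf'₂ v₂ hD2, hf'₂ v₃ hD3]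
      simp only [HInterval.GtUnion, HInterval.shift] at hgt ⊢
      omega
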